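/- Let Θ ⊂ ℝ^m be a nonempty convex compact set, let f_1,…,f_N : ℝ^m → ℝ be continuously differentiable functions, each μ_i-strongly convex with L_i-Lipschitz continuous gradient, and set ℒ = (1/N)·Σ_{i=1}^N f_i, μ = (1/N)·Σ_{i=1}^N μ_i, L = (1/N)·Σ_{i=1}^N L_i. Let θ* be the (unique) minimizer of ℒ over Θ. Let η(k) = η_c/√(k+1) with 0 < η_c ≤ 1/L. On a probability space, let {h_i(k) : i = 1,…,N, k ∈ ℕ} be random variables such that almost surely h_i(k) ≥ 0 and Σ_{i=1}^N h_i(k) = 1 for every k, such that E[h_i(k)] = 1/N for all i and k, and such that for each k the random vector (h_1(k),…,h_N(k)) is independent of the σ-algebra generated by {h_j(t) : j = 1,…,N, t < k}. Define the random sequence θ(k) by a fixed initial point θ(0) ∈ Θ and θ(k+1) = P_Θ( Σ_{i=1}^N h_i(k)·( θ(k) − η(k)·∇f_i(θ(k)) ) ), where P_Θ is the metric projection onto Θ. Then lim_{k→∞} E[ ‖θ(k) − θ*‖² ] = 0. -/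

import Mathlib

open MeasureTheory ProbabilityTheory Filter RealInnerProductSpace

section Aux

open Finset

lemma seq_to_zero (a η : ℕ → ℝ) (c C : ℝ) (hc : 0 < c) (hC : 0 ≤ C)
    (hηpos : ∀ k, 0 < η k) (hη0 : Tendsto η atTop (nhds 0))
    (hηdiv : ¬ Summable η)
    (ha0 : ∀ k, 0 ≤ a k)
    (hrec : ∀ k, a (k+1) ≤ (1 - c * η k) * a k + C * η k ^ 2) :
    Tendsto a atTop (nhds 0) := by
  rw [Metric.tendsto_atTop]
  intro ε hε
  set ε' := ε / 2 with hε'def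
  have hε' : 0 < ε' := by positivity
  have hδ : (0:ℝ) < min (1/c) (c*ε'/(2*(C+1))) := by
    apply lt_min <;> positivity
  obtain ⟨K, hK⟩ := (hη0.eventually_lt_const hδ).exists_forall_of_atTop
  have key : ∀ k, K ≤ k → c * η k ≤ 1 ∧ C * η k ≤ c * ε' / 2 := by
    intro k hk
    have h2 : η k < 1/c := lt_of_lt_of_le (hK k hk) (min_le_left _ _)
    have h3 : η k < c*ε'/(2*(C+1)) := lt_of_lt_of_le (hK k hk) (min_le_right _ _)
    have h2' := (lt_div_iff₀ hc).mp h2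
    have h3' := (lt_div_iff₀ (by positivity : (0:ℝ) < 2*(C+1))).mp h3
    have := hηpos k
    constructor
    · nlinarith
    · nlinarith
  have fact1 : ∀ k, K ≤ k → a k ≤ ε' → a (k+1) ≤ ε' := by
    intro k hk hak
    obtain ⟨h1, h2⟩ := key k hk
    have h1' : (0:ℝ) ≤ 1 - c * η k := by linarith
    have m1 := mul_le_mul_of_nonneg_left hak h1'
    have m2 := mul_le_mul_of_nonneg_right h2 (hηpos k).le
    have := hrec k
    nlinarith [mul_pos (mul_pos hc hε') (hηpos k)]
  have fact2 : ∀ k, K ≤ k → ε' < a k → a (k+1) ≤ a k - (c*ε'/2) * η k := by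
    intro k hk hak
    obtain ⟨h1, h2⟩ := key k hk
    have hcη : 0 < c * η k := mul_pos hc (hηpos k)
    have m1 := mul_le_mul_of_nonneg_left hak.le hcη.le
    have m2 := mul_le_mul_of_nonneg_right h2 (hηpos k).le
    have := hrec k
    nlinarith
  have hex : ∃ k0, K ≤ k0 ∧ a k0 ≤ ε' := by
    by_contra hcon
    push_neg at hcon
    have hbig : ∀ k, K ≤ k → ε' < a k := fun k hk => hcon k hk
    have hdesc : ∀ n : ℕ, a (K + n) ≤ a K - (c*ε'/2) * ∑ j ∈ range n, η (K + j) := by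
      intro n
      induction n with
      | zero => simp
      | succ n ih =>
        have hstep := fact2 (K + n) (Nat.le_add_right _ _) (hbig _ (Nat.le_add_right _ _))
        rw [Finset.sum_range_succ, Nat.add_succ]
        calc a (K + n + 1) ≤ a (K + n) - (c*ε'/2) * η (K + n) := hstep
          _ ≤ _ := by linarith
    have htsum : ¬ Summable (fun j => η (K + j)) := by
      intro hs
      apply hηdiv
      rw [← summable_nat_add_iff K]
      exact hs.congr (fun n => by rw [Nat.add_comm])
    have htail : Tendsto (fun n => ∑ j ∈ range n, η (K + j)) atTop atTop :=
      (not_summable_iff_tendsto_nat_atTop_of_nonneg (fun n => (hηpos _).le)).mp htsum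
    obtain ⟨n, hn⟩ := (htail.eventually_ge_atTop ((a K + 1) / (c*ε'/2))).exists
    have h5 : a K + 1 ≤ (c*ε'/2) * ∑ j ∈ range n, η (K + j) := by
      rw [← div_le_iff₀' (by positivity)]
      exact hn
    have := hdesc n
    have := ha0 (K + n)
    linarith
  obtain ⟨k0, hk0K, hk0⟩ := hex
  refine ⟨k0, fun n hn => ?_⟩
  have hle : a n ≤ ε' := by
    induction n, hn using Nat.le_induction with
    | base => exact hk0
    | succ n hn ih => exact fact1 n (le_trans hk0K hn) ih
  rw [Real.dist_eq, sub_zero, abs_of_nonneg (ha0 n)]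
  rw [hε'def] at hle
  linarith

variable {F : Type*} [NormedAddCommGroup F] [InnerProductSpace ℝ F]

/-- Characterization of the metric projection onto a convex set. -/
lemma proj_char {Θ : Set F} (hconv : Convex ℝ Θ)
    {x p : F} (hp : p ∈ Θ) (hmin : ∀ q ∈ Θ, dist x p ≤ dist x q) :
    ∀ w ∈ Θ, ⟪x - p, w - p⟫ ≤ 0 := by
  have hnem : Nonempty ↑Θ := ⟨⟨p, hp⟩⟩
  have hiInf : ‖x - p‖ = ⨅ w : Θ, ‖x - (w:F)‖ := by
    apply le_antisymm
    · exact le_ciInf fun w => by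
        simpa [dist_eq_norm] using hmin w w.2
    · exact ciInf_le ⟨0, fun r ⟨w, hw⟩ => hw ▸ norm_nonneg _⟩ (⟨p, hp⟩ : Θ)
  exact (norm_eq_iInf_iff_real_inner_le_zero hconv hp).mp hiInf

lemma proj_contract' {Θ : Set F} (hconv : Convex ℝ Θ)
    {x p q : F} (hp : p ∈ Θ) (hq : q ∈ Θ)
    (hmin : ∀ w ∈ Θ, dist x p ≤ dist x w) :
    ‖p - q‖ ^ 2 ≤ ‖x - q‖ ^ 2 := by
  have hch := proj_char hconv hp hmin q hq
  have hexp : ‖x - q‖ ^ 2 = ‖x - p‖ ^ 2 + 2 * ⟪x - p, p - q⟫ + ‖p - q‖ ^ 2 := by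
    have hs : x - q = (x - p) + (p - q) := by abel
    rw [hs, norm_add_sq_real]
  have h2 : 0 ≤ ⟪x - p, p - q⟫ := by
    have hneg : ⟪x - p, p - q⟫ = - ⟪x - p, q - p⟫ := by
      rw [← inner_neg_right]
      congr 1
      abel
    rw [hneg]
    linarith [hch]
  nlinarith [sq_nonneg ‖x - p‖]

end Aux

set_option maxHeartbeats 1000000 in
theorem statement_0 (m N : ℕ) (hN : 0 < N)
    (Θ : Set (EuclideanSpace ℝ (Fin m)))
    (hne : Θ.Nonempty) (hconv : Convex ℝ Θ) (hcomp : IsCompact Θ)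
    (f : Fin N → EuclideanSpace ℝ (Fin m) → ℝ) (μv L : Fin N → ℝ)
    (hμv : ∀ i, 0 < μv i)
    (hf : ∀ i, ContDiff ℝ 1 (f i))
    (hsc : ∀ i, ∀ x y : EuclideanSpace ℝ (Fin m),
      f i y - f i x ≥ ⟪gradient (f i) x, y - x⟫ + μv i / 2 * ‖y - x‖ ^ 2)
    (hlip : ∀ i, ∀ x y : EuclideanSpace ℝ (Fin m),
      ‖gradient (f i) x - gradient (f i) y‖ ≤ L i * ‖x - y‖)
    (ℒ : EuclideanSpace ℝ (Fin m) → ℝ)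
    (hℒ : ∀ x, ℒ x = (1 / (N : ℝ)) * ∑ i, f i x)
    (θs : EuclideanSpace ℝ (Fin m)) (hθsΘ : θs ∈ Θ)
    (hmin : ∀ θ ∈ Θ, ℒ θs ≤ ℒ θ)
    (ηc : ℝ) (hηc0 : 0 < ηc) (hηcL : ηc ≤ 1 / ((1 / (N : ℝ)) * ∑ i, L i))
    (η : ℕ → ℝ) (hη : ∀ k : ℕ, η k = ηc / Real.sqrt (k + 1))
    {Ω : Type*} [MeasurableSpace Ω] (P : Measure Ω) [IsProbabilityMeasure P]
    (h : ℕ → Fin N → Ω → ℝ) (hmeas : ∀ k i, Measurable (h k i))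
    (hh : ∀ k : ℕ, ∀ᵐ ω ∂P, (∀ i, 0 ≤ h k i ω) ∧ ∑ i, h k i ω = 1)
    (hhE : ∀ k i, ∫ ω, h k i ω ∂P = 1 / (N : ℝ))
    (hindep : ∀ k : ℕ, Indep
      (MeasurableSpace.comap (fun ω => fun i => h k i ω) inferInstance)
      (⨆ (t : ℕ) (_ : t < k) (j : Fin N),
        MeasurableSpace.comap (h t j) inferInstance) P)
    (proj : EuclideanSpace ℝ (Fin m) → EuclideanSpace ℝ (Fin m))
    (hproj : ∀ x, proj x ∈ Θ ∧ ∀ q ∈ Θ, dist x (proj x) ≤ dist x q)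
    (θ0 : EuclideanSpace ℝ (Fin m)) (hθ0Θ : θ0 ∈ Θ)
    (θseq : ℕ → Ω → EuclideanSpace ℝ (Fin m))
    (hinit : ∀ ω, θseq 0 ω = θ0)
    (hrec : ∀ (k : ℕ) (ω : Ω), θseq (k + 1) ω =
      proj (∑ i, h k i ω • (θseq k ω - η k • gradient (f i) (θseq k ω)))) :
    Tendsto (fun k : ℕ => ∫ ω, ‖θseq k ω - θs‖ ^ 2 ∂P) atTop (nhds 0) := by
  classical
  have hNR : (0:ℝ) < N := Nat.cast_pos.mpr hN
  -- continuity of gradients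
  have hgc : ∀ i, Continuous (gradient (f i)) := by
    intro i
    have hl : LipschitzWith (Real.toNNReal (L i)) (gradient (f i)) := by
      apply LipschitzWith.of_dist_le_mul
      intro x y
      rw [dist_eq_norm, dist_eq_norm]
      refine (hlip i x y).trans ?_
      exact mul_le_mul_of_nonneg_right (Real.le_coe_toNNReal _) (norm_nonneg _)
    exact hl.continuous
  -- gradient bound on Θ
  obtain ⟨c, hc⟩ : ∃ c : Fin N → ℝ, ∀ i, ∀ x ∈ Θ, ‖gradient (f i) x‖ ≤ c i := by
    choose c hc using fun i => hcomp.exists_bound_of_continuousOn (hgc i).continuousOn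
    exact ⟨c, hc⟩
  set G : ℝ := ∑ i, max (c i) 0 with hGdef
  have hG0 : 0 ≤ G := Finset.sum_nonneg fun i _ => le_max_right _ _
  have hGb : ∀ i, ∀ x ∈ Θ, ‖gradient (f i) x‖ ≤ G := by
    intro i x hx
    refine (hc i x hx).trans ((le_max_left (c i) 0).trans ?_)
    exact Finset.single_le_sum (fun j _ => le_max_right (c j) 0) (Finset.mem_univ i)
  -- radius bound
  obtain ⟨R, hR0, hR⟩ : ∃ R : ℝ, 0 ≤ R ∧ ∀ x ∈ Θ, ‖x - θs‖ ≤ R := by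
    obtain ⟨r, hr⟩ := hcomp.isBounded.subset_closedBall θs
    refine ⟨max r 0, le_max_right _ _, fun x hx => ?_⟩
    have hxr := hr hx
    rw [Metric.mem_closedBall, dist_eq_norm] at hxr
    exact hxr.trans (le_max_left _ _)
  -- strong convexity constant
  set μ : ℝ := (1 / (N:ℝ)) * ∑ i, μv i with hμdef
  have hμ0 : 0 < μ :=
    mul_pos (by positivity) (Finset.sum_pos (fun i _ => hμv i) ⟨⟨0, hN⟩, Finset.mem_univ _⟩)
  -- iterates stay in Θ
  have hmem : ∀ k ω, θseq k ω ∈ Θ := by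
    intro k
    induction k with
    | zero => intro ω; rw [hinit ω]; exact hθ0Θ
    | succ k ih => intro ω; rw [hrec k ω]; exact (hproj _).1
  -- projection is continuous
  have hprojlip : LipschitzWith 1 proj := by
    apply LipschitzWith.of_dist_le_mul
    intro x y
    rw [NNReal.coe_one, one_mul, dist_eq_norm, dist_eq_norm]
    have h1 := proj_char hconv (hproj x).1 (hproj x).2 (proj y) (hproj y).1
    have h2 := proj_char hconv (hproj y).1 (hproj y).2 (proj x) (hproj x).1
    by_cases hz : proj x - proj y = 0
    · rw [hz, norm_zero]; exact norm_nonneg _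
    · have e1' : 0 ≤ ⟪x - proj x, proj x - proj y⟫ := by
        have e1eq : ⟪x - proj x, proj x - proj y⟫ = - ⟪x - proj x, proj y - proj x⟫ := by
          rw [← inner_neg_right]; congr 1; abel
        rw [e1eq]; linarith [h1]
      have expand : ⟪x - y, proj x - proj y⟫
          = ⟪x - proj x, proj x - proj y⟫ + ⟪proj x - proj y, proj x - proj y⟫
            + ⟪proj y - y, proj x - proj y⟫ := by
        rw [← inner_add_left, ← inner_add_left]
        congr 1
        abel
      have e2' : 0 ≤ ⟪proj y - y, proj x - proj y⟫ := by
        have e2eq : ⟪proj y - y, proj x - proj y⟫ = - ⟪y - proj y, proj x - proj y⟫ := by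
          rw [← inner_neg_left]; congr 1; abel
        rw [e2eq]; linarith [h2]
      have key : ⟪proj x - proj y, proj x - proj y⟫ ≤ ⟪x - y, proj x - proj y⟫ := by
        rw [expand]; linarith
      have hnn : 0 < ‖proj x - proj y‖ := norm_pos_iff.mpr hz
      have hcs := real_inner_le_norm (x - y) (proj x - proj y)
      rw [real_inner_self_eq_norm_sq] at key
      nlinarith
  -- σ-algebras
  set 𝒢 : ℕ → MeasurableSpace Ω := fun k =>
    ⨆ (t : ℕ) (_ : t < k) (j : Fin N), MeasurableSpace.comap (h t j) inferInstance with h𝒢def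
  have h𝒢le : ∀ k, 𝒢 k ≤ ‹MeasurableSpace Ω› := by
    intro k
    refine iSup_le fun t => iSup_le fun _ => iSup_le fun j => ?_
    exact (hmeas t j).comap_le
  have h𝒢mono : ∀ {k k' : ℕ}, k ≤ k' → 𝒢 k ≤ 𝒢 k' := by
    intro k k' hkk
    refine iSup_le fun t => iSup_le fun ht => iSup_le fun j => ?_
    exact le_iSup_of_le t (le_iSup_of_le (lt_of_lt_of_le ht hkk) (le_iSup_of_le j le_rfl))
  have hhG : ∀ {t k : ℕ} (j : Fin N), t < k → Measurable[𝒢 k] (h t j) := by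
    intro t k j ht
    rw [measurable_iff_comap_le]
    exact le_iSup_of_le t (le_iSup_of_le ht (le_iSup_of_le j le_rfl))
  -- measurability of iterates
  have hθG : ∀ k, Measurable[𝒢 k] (θseq k) := by
    intro k
    induction k with
    | zero =>
      have h0 : θseq 0 = fun _ => θ0 := funext hinit
      rw [h0]; exact measurable_const
    | succ k ih =>
      have hs : θseq (k+1) = fun ω =>
          proj (∑ i, h k i ω • (θseq k ω - η k • gradient (f i) (θseq k ω))) :=
        funext (hrec k)
      rw [hs]
      apply hprojlip.continuous.measurable.comp
      apply Finset.measurable_sum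
      intro i _
      have hθk : Measurable[𝒢 (k+1)] (θseq k) := ih.mono (h𝒢mono (Nat.le_succ k)) le_rfl
      have hvec : Measurable[𝒢 (k+1)]
          (fun ω => θseq k ω - η k • gradient (f i) (θseq k ω)) := by
        have hcont : Continuous (fun x : EuclideanSpace ℝ (Fin m) => x - η k • gradient (f i) x) :=
          continuous_id.sub ((hgc i).const_smul (η k))
        exact hcont.measurable.comp hθk
      exact (hhG i (Nat.lt_succ_self k)).smul hvec
  have hθmeas : ∀ k, Measurable (θseq k) := fun k => (hθG k).mono (h𝒢le k) le_rfl
  -- variational inequality at θs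
  have hvar : ∀ x ∈ Θ, 0 ≤ ∑ i, ⟪gradient (f i) θs, x - θs⟫ := by
    intro x hx
    set g : ℝ → ℝ := fun t => ∑ i, ⟪gradient (f i) (θs + t • (x - θs)), x - θs⟫ with hgdef
    have hgcont : Continuous g := by
      apply continuous_finset_sum
      intro i _
      exact Continuous.inner ((hgc i).comp (continuous_const.add
        (continuous_id.smul continuous_const))) continuous_const
    have hgpos : ∀ t ∈ Set.Ioc (0:ℝ) 1, 0 ≤ g t := by
      rintro t ⟨ht0, ht1⟩
      set z := θs + t • (x - θs) with hzdef
      have hzΘ : z ∈ Θ := by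
        have hz2 : z = (1 - t) • θs + t • x := by rw [hzdef]; module
        rw [hz2]
        exact hconv hθsΘ hx (by linarith) ht0.le (by ring)
      have hLz : ℒ θs ≤ ℒ z := hmin z hzΘ
      have hsums : ∑ i, f i θs - ∑ i, f i z
          ≥ ∑ i, ⟪gradient (f i) z, θs - z⟫ + (∑ i, μv i / 2) * ‖θs - z‖^2 := by
        rw [Finset.sum_mul, ← Finset.sum_add_distrib, ← Finset.sum_sub_distrib]
        exact Finset.sum_le_sum fun i _ => hsc i z θs
      have hle0 : ∑ i, f i θs - ∑ i, f i z ≤ 0 := by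
        have e1 : ∑ i, f i θs = N * ℒ θs := by rw [hℒ]; field_simp
        have e2 : ∑ i, f i z = N * ℒ z := by rw [hℒ]; field_simp
        rw [e1, e2]
        nlinarith
      have hz3 : θs - z = (-t) • (x - θs) := by rw [hzdef]; module
      have hinner : ∑ i, ⟪gradient (f i) z, θs - z⟫ = - (t * g t) := by
        simp only [hgdef, hz3, real_inner_smul_right]
        rw [← Finset.mul_sum]
        ring
      have hnorm : ‖θs - z‖^2 = t^2 * ‖x - θs‖^2 := by
        rw [hz3, norm_smul, Real.norm_eq_abs, abs_neg, abs_of_pos ht0]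
        ring
      have hμvsum : 0 ≤ ∑ i, μv i / 2 := Finset.sum_nonneg fun i _ => by linarith [hμv i]
      have htg : 0 ≤ t * g t := by
        rw [hinner, hnorm] at hsums
        nlinarith [mul_nonneg (mul_nonneg hμvsum (sq_nonneg t)) (sq_nonneg ‖x - θs‖)]
      exact nonneg_of_mul_nonneg_right htg ht0
    have h0 : g 0 = ∑ i, ⟪gradient (f i) θs, x - θs⟫ := by
      simp [hgdef]
    have htend : Tendsto g (nhdsWithin 0 (Set.Ioi 0)) (nhds (g 0)) :=
      (hgcont.tendsto 0).mono_left nhdsWithin_le_nhds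
    rw [← h0]
    refine ge_of_tendsto htend ?_
    filter_upwards [Ioc_mem_nhdsGT_of_mem (Set.mem_Ico.mpr ⟨le_refl (0:ℝ), zero_lt_one⟩)]
      with t ht using hgpos t ht
  -- strong monotonicity lower bound
  have hlow : ∀ x ∈ Θ, μ * ‖x - θs‖^2 ≤ (1/(N:ℝ)) * ∑ i, ⟪gradient (f i) x, x - θs⟫ := by
    intro x hx
    have hmono : ∀ i : Fin N, μv i * ‖x - θs‖^2
        ≤ ⟪gradient (f i) x, x - θs⟫ - ⟪gradient (f i) θs, x - θs⟫ := by
      intro i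
      have h1 := hsc i x θs
      have h2 := hsc i θs x
      have e0 : θs - x = -(x - θs) := by abel
      rw [e0, inner_neg_right, norm_neg] at h1
      nlinarith
    have hsum3 : (∑ i, μv i) * ‖x - θs‖^2 ≤ ∑ i, ⟪gradient (f i) x, x - θs⟫ := by
      rw [Finset.sum_mul]
      have hv := hvar x hx
      calc ∑ i, μv i * ‖x - θs‖^2
          ≤ ∑ i, (⟪gradient (f i) x, x - θs⟫ - ⟪gradient (f i) θs, x - θs⟫) :=
            Finset.sum_le_sum fun i _ => hmono i
        _ = (∑ i, ⟪gradient (f i) x, x - θs⟫) - ∑ i, ⟪gradient (f i) θs, x - θs⟫ :=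
            Finset.sum_sub_distrib _ _
        _ ≤ ∑ i, ⟪gradient (f i) x, x - θs⟫ := by linarith
    rw [hμdef, mul_assoc]
    exact mul_le_mul_of_nonneg_left hsum3 (by positivity)
  -- the ψ functions
  set ψ : ℕ → Fin N → Ω → ℝ :=
    fun k i ω => ⟪gradient (f i) (θseq k ω), θseq k ω - θs⟫ with hψdef
  have hψG : ∀ k i, Measurable[𝒢 k] (ψ k i) := by
    intro k i
    have hcont : Continuous (fun x : EuclideanSpace ℝ (Fin m) => (⟪gradient (f i) x, x - θs⟫ : ℝ)) :=
      Continuous.inner (hgc i) (continuous_id.sub continuous_const)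
    exact hcont.measurable.comp (hθG k)
  have hψmeas : ∀ k i, Measurable (ψ k i) := fun k i => (hψG k i).mono (h𝒢le k) le_rfl
  have hψbd : ∀ k i ω, |ψ k i ω| ≤ G * R := by
    intro k i ω
    refine (abs_real_inner_le_norm _ _).trans ?_
    exact mul_le_mul (hGb i _ (hmem k ω)) (hR _ (hmem k ω)) (norm_nonneg _) hG0
  have hIψ : ∀ k i, Integrable (ψ k i) P := by
    intro k i
    refine Integrable.mono' (integrable_const (G * R)) (hψmeas k i).aestronglyMeasurable ?_
    exact ae_of_all _ fun ω => by rw [Real.norm_eq_abs]; exact hψbd k i ω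
  have hIhψ : ∀ k i, Integrable (fun ω => h k i ω * ψ k i ω) P := by
    intro k i
    refine Integrable.mono' (integrable_const (G * R))
      ((hmeas k i).mul (hψmeas k i)).aestronglyMeasurable ?_
    filter_upwards [hh k] with ω hω
    obtain ⟨hnn, hsum1⟩ := hω
    have hle1 : h k i ω ≤ 1 := by
      rw [← hsum1]
      exact Finset.single_le_sum (fun j _ => hnn j) (Finset.mem_univ i)
    rw [Real.norm_eq_abs, abs_mul]
    calc |h k i ω| * |ψ k i ω| ≤ 1 * (G * R) := by
          apply mul_le_mul _ (hψbd k i ω) (abs_nonneg _) zero_le_one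
          rw [abs_of_nonneg (hnn i)]; exact hle1
      _ = G * R := one_mul _
  -- independence step
  have hprod : ∀ k i, ∫ ω, h k i ω * ψ k i ω ∂P = (1/(N:ℝ)) * ∫ ω, ψ k i ω ∂P := by
    intro k i
    have hX : Measurable[MeasurableSpace.comap (fun ω => fun i => h k i ω) inferInstance]
        (h k i) := by
      have hvec : Measurable[MeasurableSpace.comap (fun ω => fun i => h k i ω) inferInstance]
          (fun ω => fun i => h k i ω) := Measurable.of_comap_le le_rfl
      exact (measurable_pi_apply i).comp hvec
    have hind : IndepFun (h k i) (ψ k i) P := by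
      apply indep_of_indep_of_le_left (indep_of_indep_of_le_right (hindep k) ?_) ?_
      · exact (hψG k i).comap_le
      · exact hX.comap_le
    have := hind.integral_mul_eq_mul_integral (hmeas k i).aestronglyMeasurable
      (hψmeas k i).aestronglyMeasurable
    calc ∫ ω, h k i ω * ψ k i ω ∂P = ∫ ω, (h k i * ψ k i) ω ∂P := rfl
      _ = (∫ ω, h k i ω ∂P) * ∫ ω, ψ k i ω ∂P := this
      _ = (1/(N:ℝ)) * ∫ ω, ψ k i ω ∂P := by rw [hhE k i]
  -- integrability of the squared distances
  have hIa : ∀ k, Integrable (fun ω => ‖θseq k ω - θs‖^2) P := by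
    intro k
    have hmeas2 : Measurable (fun ω => ‖θseq k ω - θs‖^2) := by
      have hcont : Continuous (fun x : EuclideanSpace ℝ (Fin m) => ‖x - θs‖^2) :=
        ((continuous_id.sub continuous_const).norm).pow 2
      exact hcont.measurable.comp (hθmeas k)
    refine Integrable.mono' (integrable_const (R^2)) hmeas2.aestronglyMeasurable ?_
    refine ae_of_all _ fun ω => ?_
    rw [Real.norm_eq_abs, abs_of_nonneg (sq_nonneg _)]
    have := hR _ (hmem k ω)
    nlinarith [norm_nonneg (θseq k ω - θs)]
  set A : ℕ → ℝ := fun k => ∫ ω, ‖θseq k ω - θs‖^2 ∂P with hAdef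
  have hA0 : ∀ k, 0 ≤ A k := fun k => integral_nonneg fun ω => sq_nonneg _
  have hηpos : ∀ k, 0 < η k := by
    intro k
    rw [hη]
    have : (0:ℝ) < Real.sqrt (k+1) := Real.sqrt_pos.mpr (by positivity)
    positivity
  -- the main recursion
  have hkey : ∀ k, A (k+1) ≤ (1 - (2*μ) * η k) * A k + G^2 * η k ^ 2 := by
    intro k
    have hpt : ∀ᵐ ω ∂P, ‖θseq (k+1) ω - θs‖^2
        ≤ ‖θseq k ω - θs‖^2 - 2 * η k * ∑ i, h k i ω * ψ k i ω + G^2 * η k ^2 := by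
      filter_upwards [hh k] with ω hω
      obtain ⟨hnn, hsum1⟩ := hω
      set x := θseq k ω with hxdef
      set g := ∑ i, h k i ω • gradient (f i) x with hgdef2
      have hy : ∑ i, h k i ω • (x - η k • gradient (f i) x) = x - η k • g := by
        simp only [smul_sub, Finset.sum_sub_distrib, ← Finset.sum_smul, hsum1, one_smul]
        congr 1
        rw [hgdef2, Finset.smul_sum]
        exact Finset.sum_congr rfl fun i _ => smul_comm _ _ _
      have hproj2 : ‖θseq (k+1) ω - θs‖^2 ≤ ‖(x - η k • g) - θs‖^2 := by
        rw [hrec k ω, ← hxdef, hy]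
        exact proj_contract' hconv (hproj _).1 hθsΘ (hproj _).2
      have hexp : ‖(x - η k • g) - θs‖^2
          = ‖x - θs‖^2 - 2 * (η k * ⟪x - θs, g⟫) + (η k * ‖g‖)^2 := by
        have e := norm_sub_sq_real (x - θs) (η k • g)
        rw [real_inner_smul_right, norm_smul, Real.norm_eq_abs, abs_of_pos (hηpos k)] at e
        rw [show x - η k • g - θs = (x - θs) - η k • g by abel, e]
      have hinnerg : ⟪x - θs, g⟫ = ∑ i, h k i ω * ψ k i ω := by
        rw [hgdef2, inner_sum]
        exact Finset.sum_congr rfl fun i _ => by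
          rw [real_inner_smul_right, real_inner_comm]
      have hgbound : ‖g‖ ≤ G := by
        calc ‖g‖ ≤ ∑ i, ‖h k i ω • gradient (f i) x‖ := norm_sum_le _ _
          _ = ∑ i, h k i ω * ‖gradient (f i) x‖ :=
              Finset.sum_congr rfl fun i _ => by
                rw [norm_smul, Real.norm_eq_abs, abs_of_nonneg (hnn i)]
          _ ≤ ∑ i, h k i ω * G :=
              Finset.sum_le_sum fun i _ =>
                mul_le_mul_of_nonneg_left (hGb i x (hmem k ω)) (hnn i)
          _ = G := by rw [← Finset.sum_mul, hsum1, one_mul]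
      rw [hexp, hinnerg] at hproj2
      have hgsq : (η k * ‖g‖)^2 ≤ G^2 * η k^2 := by
        nlinarith [mul_self_le_mul_self (norm_nonneg g) hgbound, sq_nonneg (η k)]
      linarith
    have hIsum : Integrable (fun ω => ∑ i, h k i ω * ψ k i ω) P :=
      integrable_finset_sum _ fun i _ => hIhψ k i
    have hIrhs : Integrable (fun ω =>
        ‖θseq k ω - θs‖^2 - 2 * η k * ∑ i, h k i ω * ψ k i ω + G^2 * η k ^2) P :=
      ((hIa k).sub (hIsum.const_mul _)).add (integrable_const _)
    have hstep1 : A (k+1) ≤ ∫ ω, (‖θseq k ω - θs‖^2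
        - 2 * η k * ∑ i, h k i ω * ψ k i ω + G^2 * η k ^2) ∂P :=
      integral_mono_ae (hIa (k+1)) hIrhs hpt
    have hI1 : Integrable (fun ω =>
        ‖θseq k ω - θs‖^2 - 2 * η k * ∑ i, h k i ω * ψ k i ω) P :=
      (hIa k).sub (hIsum.const_mul _)
    have hstep2 : ∫ ω, (‖θseq k ω - θs‖^2
        - 2 * η k * ∑ i, h k i ω * ψ k i ω + G^2 * η k ^2) ∂P
        = A k - 2 * η k * ∑ i, ∫ ω, h k i ω * ψ k i ω ∂P + G^2 * η k ^2 := by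
      rw [integral_add hI1 (integrable_const _),
        integral_sub (hIa k) (hIsum.const_mul _), integral_const]
      simp only [probReal_univ, one_smul, smul_eq_mul]
      rw [integral_const_mul, integral_finset_sum _ fun i _ => hIhψ k i, hAdef]
      ring
    have hlow2 : μ * A k ≤ ∑ i, ∫ ω, h k i ω * ψ k i ω ∂P := by
      have he : ∑ i, ∫ ω, h k i ω * ψ k i ω ∂P
          = ∫ ω, (1/(N:ℝ)) * ∑ i, ψ k i ω ∂P := by
        rw [integral_const_mul, integral_finset_sum _ fun i _ => hIψ k i,
          Finset.mul_sum]
        exact Finset.sum_congr rfl fun i _ => hprod k i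
      rw [he]
      have hμa : μ * A k = ∫ ω, μ * ‖θseq k ω - θs‖^2 ∂P := by
        rw [integral_const_mul]
      rw [hμa]
      apply integral_mono ((hIa k).const_mul μ)
        ((integrable_finset_sum _ fun i _ => hIψ k i).const_mul _)
      intro ω
      exact hlow (θseq k ω) (hmem k ω)
    have hfinal : A (k+1) ≤ A k - 2 * η k * (μ * A k) + G^2 * η k ^2 := by
      rw [hstep2] at hstep1
      have hm : 2 * η k * (μ * A k) ≤ 2 * η k * ∑ i, ∫ ω, h k i ω * ψ k i ω ∂P :=
        mul_le_mul_of_nonneg_left hlow2 (by linarith [hηpos k])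
      linarith
    calc A (k+1) ≤ A k - 2 * η k * (μ * A k) + G^2 * η k ^2 := hfinal
      _ = (1 - (2*μ) * η k) * A k + G^2 * η k ^ 2 := by ring
  -- limit of step sizes
  have hη0 : Tendsto η atTop (nhds 0) := by
    have hsq : Tendsto Real.sqrt atTop atTop := by
      rw [tendsto_atTop_atTop]
      intro b
      refine ⟨b^2, fun x hx => ?_⟩
      have h1 := Real.sqrt_le_sqrt hx
      have hb : b ≤ Real.sqrt (b^2) := by
        rw [Real.sqrt_sq_eq_abs]; exact le_abs_self b
      linarith
    have h2 : Tendsto (fun k : ℕ => Real.sqrt ((k:ℝ)+1)) atTop atTop :=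
      hsq.comp (tendsto_atTop_add_const_right atTop 1 tendsto_natCast_atTop_atTop)
    have h3 : Tendsto (fun k : ℕ => ηc * (Real.sqrt ((k:ℝ)+1))⁻¹) atTop (nhds (ηc * 0)) :=
      (tendsto_inv_atTop_zero.comp h2).const_mul ηc
    rw [mul_zero] at h3
    refine h3.congr fun k => ?_
    rw [hη, div_eq_mul_inv]
  have hηdiv : ¬ Summable η := by
    intro hs
    have hs1 : Summable (fun k : ℕ => 1 / Real.sqrt ((k:ℝ)+1)) := by
      refine (hs.mul_left ηc⁻¹).congr fun k => ?_
      rw [hη]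
      field_simp
    have hs2 : Summable (fun k : ℕ => 1 / ((k:ℝ)+1)) := by
      apply Summable.of_nonneg_of_le (fun k => by positivity) (fun k => ?_) hs1
      have hsq1 : (1:ℝ) ≤ Real.sqrt ((k:ℝ)+1) := by
        have h9 : Real.sqrt 1 ≤ Real.sqrt ((k:ℝ)+1) :=
          Real.sqrt_le_sqrt (by linarith [Nat.cast_nonneg (α := ℝ) k])
        simpa using h9
      have hsq2 : Real.sqrt ((k:ℝ)+1) ≤ (k:ℝ)+1 := by
        have := Real.sq_sqrt (by positivity : (0:ℝ) ≤ (k:ℝ)+1)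
        nlinarith
      apply one_div_le_one_div_of_le (by linarith) hsq2
    apply Real.not_summable_one_div_natCast
    rw [← summable_nat_add_iff 1]
    exact hs2.congr fun n => by push_cast; ring
  exact seq_to_zero A η (2*μ) (G^2) (by positivity) (by positivity) hηpos hη0 hηdiv hA0 hkey
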